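/- arXiv:1302.4546 — 3 statements merged into one kernel-verified Lean document; each statement's English description precedes it below -/
import Mathlib

section
/- The set function F1(S) = nL − Σ_{u ∈ V∖S} h^L_{uS} is nondecreasing: for S ⊆ T ⊆ V, F1(S) ≤ F1(T), and F1(∅) = 0. -/
open scoped BigOperators

/-- Transition probability of the simple random walk. -/
noncomputable def transP {V : Type*} [Fintype V] [DecidableEq V] (G : SimpleGraph V)
    [DecidableRel G.Adj] (u w : V) : ℝ :=
  if G.Adj u w then 1 / (G.degree u : ℝ) else 0

/-- The generalized `L`-truncated hitting time `h^L_{uS}`, defined recursively: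
`h^0_{uS} = 0`; for `L ≥ 1`, `h^L_{uS} = 0` if `u ∈ S`, and
`h^L_{uS} = 1 + ∑_{w ∈ V∖S} p_{uw} h^{L-1}_{wS}` otherwise. -/
noncomputable def hT {V : Type*} [Fintype V] [DecidableEq V] (G : SimpleGraph V)
    [DecidableRel G.Adj] : ℕ → V → Finset V → ℝ
  | 0, _, _ => 0
  | (L + 1), u, S => if u ∈ S then 0 else 1 + ∑ w ∈ Sᶜ, transP G u w * hT G L w S

/-- The objective function `F1(S) = nL − ∑_{u ∈ V∖S} h^L_{uS}`. -/
noncomputable def F1 {V : Type*} [Fintype V] [DecidableEq V] (G : SimpleGraph V)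
    [DecidableRel G.Adj] (L : ℕ) (S : Finset V) : ℝ :=
  (Fintype.card V : ℝ) * L - ∑ u ∈ Sᶜ, hT G L u S

lemma transP_nonneg {V : Type*} [Fintype V] [DecidableEq V] (G : SimpleGraph V)
    [DecidableRel G.Adj] (u w : V) : 0 ≤ transP G u w := by
  unfold transP; split <;> positivity

lemma sum_transP {V : Type*} [Fintype V] [DecidableEq V] (G : SimpleGraph V)
    [DecidableRel G.Adj] (hG : ∀ v : V, (G.neighborFinset v).Nonempty) (u : V) :
    ∑ w, transP G u w = 1 := by
  unfold transP
  rw [← Finset.sum_filter]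
  have h1 : Finset.univ.filter (G.Adj u) = G.neighborFinset u := by
    ext w; simp
  rw [h1, Finset.sum_const, ← SimpleGraph.card_neighborFinset_eq_degree, nsmul_eq_mul]
  have hd : ((G.neighborFinset u).card : ℝ) ≠ 0 := by
    exact_mod_cast (hG u).card_pos.ne'
  rw [mul_one_div]
  exact div_self hd

lemma hT_nonneg {V : Type*} [Fintype V] [DecidableEq V] (G : SimpleGraph V)
    [DecidableRel G.Adj] (L : ℕ) (u : V) (S : Finset V) : 0 ≤ hT G L u S := by
  induction L generalizing u with
  | zero => simp [hT]
  | succ L ih =>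
    simp only [hT]
    split
    · exact le_rfl
    · have : 0 ≤ ∑ w ∈ Sᶜ, transP G u w * hT G L w S :=
        Finset.sum_nonneg fun w _ => mul_nonneg (transP_nonneg G u w) (ih w)
      linarith

lemma hT_anti {V : Type*} [Fintype V] [DecidableEq V] (G : SimpleGraph V)
    [DecidableRel G.Adj] (L : ℕ) (u : V) {S T : Finset V} (hST : S ⊆ T) :
    hT G L u T ≤ hT G L u S := by
  induction L generalizing u with
  | zero => simp [hT]
  | succ L ih =>
    simp only [hT]
    by_cases hu : u ∈ T
    · simp only [hu, if_true]
      split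
      · exact le_rfl
      · have : 0 ≤ ∑ w ∈ Sᶜ, transP G u w * hT G L w S :=
          Finset.sum_nonneg fun w _ => mul_nonneg (transP_nonneg G u w) (hT_nonneg G L w S)
        linarith
    · have hs : u ∉ S := fun h => hu (hST h)
      simp only [hu, hs, if_false]
      have h1 : ∑ w ∈ Tᶜ, transP G u w * hT G L w T ≤
          ∑ w ∈ Tᶜ, transP G u w * hT G L w S :=
        Finset.sum_le_sum fun w _ =>
          mul_le_mul_of_nonneg_left (ih w) (transP_nonneg G u w)
      have h2 : ∑ w ∈ Tᶜ, transP G u w * hT G L w S ≤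
          ∑ w ∈ Sᶜ, transP G u w * hT G L w S := by
        apply Finset.sum_le_sum_of_subset_of_nonneg
        · exact Finset.compl_subset_compl.mpr hST
        · intro w _ _
          exact mul_nonneg (transP_nonneg G u w) (hT_nonneg G L w S)
      linarith

lemma hT_empty {V : Type*} [Fintype V] [DecidableEq V] (G : SimpleGraph V)
    [DecidableRel G.Adj] (hG : ∀ v : V, (G.neighborFinset v).Nonempty) (L : ℕ) (u : V) :
    hT G L u (∅ : Finset V) = L := by
  induction L generalizing u with
  | zero => simp [hT]
  | succ L ih =>
    simp only [hT, Finset.notMem_empty, if_false, Finset.compl_empty]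
    have : ∑ w, transP G u w * hT G L w (∅ : Finset V) = ∑ w, transP G u w * L := by
      apply Finset.sum_congr rfl; intro w _; rw [ih w]
    rw [this, ← Finset.sum_mul, sum_transP G hG u]
    push_cast; ring

/-- `F1` is nondecreasing, with `F1(∅) = 0`. -/
theorem F1_monotone {V : Type*} [Fintype V] [DecidableEq V] (G : SimpleGraph V)
    [DecidableRel G.Adj] (hG : ∀ v : V, (G.neighborFinset v).Nonempty) (L : ℕ) :
    F1 G L (∅ : Finset V) = 0 ∧
      ∀ S T : Finset V, S ⊆ T → F1 G L S ≤ F1 G L T := by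
  constructor
  · unfold F1
    rw [Finset.compl_empty]
    have : ∑ u, hT G L u (∅ : Finset V) = ∑ u : V, (L : ℝ) := by
      apply Finset.sum_congr rfl; intro u _; exact hT_empty G hG L u
    rw [this, Finset.sum_const, Finset.card_univ]
    simp [nsmul_eq_mul]
  · intro S T hST
    unfold F1
    have h1 : ∑ u ∈ Tᶜ, hT G L u T ≤ ∑ u ∈ Tᶜ, hT G L u S :=
      Finset.sum_le_sum fun u _ => hT_anti G L u hST
    have h2 : ∑ u ∈ Tᶜ, hT G L u S ≤ ∑ u ∈ Sᶜ, hT G L u S :=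
      Finset.sum_le_sum_of_subset_of_nonneg (Finset.compl_subset_compl.mpr hST)
        (fun u _ _ => hT_nonneg G L u S)
    linarith
end

section
/- For fixed S and u, the difference of marginal gains of F2 satisfies the identity ρ_u(S) − ρ_u(T) = Σ_{w∈V} (1 − Π_{v∈T∖S}(1 − p^L_{wv})) · p^L_{wu} · Π_{v∈S}(1 − p^L_{wv}) for S ⊆ T ⊆ V and u ∉ T, where ρ_u(S) = F2(S∪{u}) − F2(S); in particular this difference is nonnegative. -/
open scoped BigOperators

/-- Hitting probability of a set: `p^L_{wS} = 1 − ∏_{v∈S}(1 − p^L_{wv})`. -/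
def pSet {V : Type*} [Fintype V] (q : V → V → ℝ) (w : V) (S : Finset V) : ℝ :=
  1 - ∏ v ∈ S, (1 - q w v)

/-- The objective function `F2(S) = ∑_{w∈V} p^L_{wS}`. -/
def F2 {V : Type*} [Fintype V] (q : V → V → ℝ) (S : Finset V) : ℝ :=
  ∑ w : V, pSet q w S

/-- The marginal gain `ρ_u(S) = F2(S ∪ {u}) − F2(S)`. -/
def rho {V : Type*} [Fintype V] [DecidableEq V] (q : V → V → ℝ) (u : V) (S : Finset V) : ℝ :=
  F2 q (insert u S) - F2 q S

/-- for `S ⊆ T ⊆ V` and `u ∉ T`,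
`ρ_u(S) − ρ_u(T) = ∑_w (1 − ∏_{v∈T∖S}(1 − p^L_{wv})) · p^L_{wu} · ∏_{v∈S}(1 − p^L_{wv})`,
and in particular this difference is nonnegative. -/
theorem rho_diff_eq {V : Type*} [Fintype V] [DecidableEq V] (q : V → V → ℝ)
    (hq : ∀ w v : V, q w v ∈ Set.Icc (0 : ℝ) 1)
    (S T : Finset V) (hST : S ⊆ T) (u : V) (hu : u ∉ T) :
    rho q u S - rho q u T =
        ∑ w : V, (1 - ∏ v ∈ T \ S, (1 - q w v)) * q w u * ∏ v ∈ S, (1 - q w v) ∧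
      0 ≤ rho q u S - rho q u T := by
  have hrho : ∀ (A : Finset V), u ∉ A →
      rho q u A = ∑ w : V, q w u * ∏ v ∈ A, (1 - q w v) := by
    intro A hA
    unfold rho F2 pSet
    rw [← Finset.sum_sub_distrib]
    refine Finset.sum_congr rfl fun w _ => ?_
    rw [Finset.prod_insert hA]; ring
  have huS : u ∉ S := fun h => hu (hST h)
  have key : rho q u S - rho q u T =
      ∑ w : V, (1 - ∏ v ∈ T \ S, (1 - q w v)) * q w u * ∏ v ∈ S, (1 - q w v) := by
    rw [hrho S huS, hrho T hu, ← Finset.sum_sub_distrib]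
    refine Finset.sum_congr rfl fun w _ => ?_
    rw [← Finset.prod_sdiff hST]
    ring
  refine ⟨key, key ▸ Finset.sum_nonneg fun w _ => ?_⟩
  have h1 : (0:ℝ) ≤ 1 - ∏ v ∈ T \ S, (1 - q w v) := by
    have := Finset.prod_le_one (s := T \ S) (f := fun v => 1 - q w v)
      (fun v _ => by linarith [(hq w v).2])
      (fun v _ => by linarith [(hq w v).1])
    linarith
  exact mul_nonneg (mul_nonneg h1 (hq w u).1)
    (Finset.prod_nonneg fun v _ => by linarith [(hq w v).2])
end

section
/- If f : Finset V → ℝ is a nondecreasing submodular function with f(∅) = 0, then the greedy algorithm that iteratively adds an element with maximum marginal gain for k steps returns a set S_k with f(S_k) ≥ (1 − (1 − 1/k)^k) · max_{|T| ≤ k} f(T) ≥ (1 − 1/e) · max_{|T| ≤ k} f(T). -/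
open scoped BigOperators

private lemma greedy_telescope {V : Type*} [DecidableEq V]
    (f : Finset V → ℝ)
    (hsub : ∀ S T : Finset V, S ⊆ T → ∀ u ∉ T,
      f (insert u T) - f T ≤ f (insert u S) - f S) :
    ∀ (T S : Finset V), f (S ∪ T) - f S ≤ ∑ t ∈ T, (f (insert t S) - f S) := by
  intro T
  induction T using Finset.induction_on with
  | empty => intro S; simp
  | @insert a T ha ih =>
    intro S
    rw [Finset.sum_insert ha]
    by_cases haS : a ∈ S
    · rw [Finset.union_insert, Finset.insert_eq_self.mpr (Finset.mem_union_left T haS),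
        Finset.insert_eq_self.mpr haS]
      have := ih S
      linarith
    · have haST : a ∉ S ∪ T := by simp [haS, ha]
      have h1 := hsub S (S ∪ T) Finset.subset_union_left a haST
      have h2 := ih S
      rw [Finset.union_insert]
      linarith

/-- the `(1 − 1/e)` guarantee for greedy maximization of a nondecreasing
submodular set function with `f(∅) = 0` under a cardinality constraint `k`: the set `S k`
produced by `k` greedy steps satisfies
`f(S k) ≥ (1 − (1 − 1/k)^k) · max_{|T| ≤ k} f(T) ≥ (1 − 1/e) · max_{|T| ≤ k} f(T)`. -/
theorem greedy_submodular_guarantee {V : Type*} [Fintype V] [DecidableEq V]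
    (f : Finset V → ℝ)
    (hempty : f ∅ = 0)
    (hmono : ∀ S T : Finset V, S ⊆ T → f S ≤ f T)
    (hsub : ∀ S T : Finset V, S ⊆ T → ∀ u ∉ T,
      f (insert u T) - f T ≤ f (insert u S) - f S)
    (k : ℕ) (hk : 0 < k)
    (S : ℕ → Finset V) (hS0 : S 0 = ∅)
    (hgreedy : ∀ i < k, ∃ u ∉ S i, S (i + 1) = insert u (S i) ∧
      ∀ w ∉ S i, f (insert w (S i)) - f (S i) ≤ f (insert u (S i)) - f (S i)) :
    ∀ T : Finset V, T.card ≤ k →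
      (1 - (1 - 1 / (k : ℝ)) ^ k) * f T ≤ f (S k) ∧
      (1 - 1 / Real.exp 1) * f T ≤ f (S k) := by
  intro T hT
  have hTnn : 0 ≤ f T := by rw [← hempty]; exact hmono ∅ T (Finset.empty_subset T)
  have hkpos : (0:ℝ) < k := by exact_mod_cast hk
  have hk1 : (1:ℝ) ≤ k := by exact_mod_cast hk
  have hq : (0:ℝ) ≤ 1 - 1/(k:ℝ) := by
    rw [sub_nonneg, div_le_one hkpos]; exact hk1
  have hstep : ∀ i < k, f T - f (S (i+1)) ≤ (1 - 1/(k:ℝ)) * (f T - f (S i)) := by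
    intro i hi
    obtain ⟨u, hu, hSi1, hmax⟩ := hgreedy i hi
    set g := f (S (i+1)) - f (S i) with hg
    have hgain0 : 0 ≤ g := by
      rw [hg, hSi1]
      have := hmono (S i) (insert u (S i)) (Finset.subset_insert _ _)
      linarith
    have hbound : ∀ t : V, f (insert t (S i)) - f (S i) ≤ g := by
      intro t
      by_cases ht : t ∈ S i
      · rw [Finset.insert_eq_self.mpr ht]; simpa using hgain0
      · rw [hg, hSi1]; exact hmax t ht
    have h1 : f T ≤ f (S i ∪ T) := hmono T _ Finset.subset_union_right
    have h2 := greedy_telescope f hsub T (S i)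
    have h3 : ∑ t ∈ T, (f (insert t (S i)) - f (S i)) ≤ ∑ _t ∈ T, g :=
      Finset.sum_le_sum (fun t _ => hbound t)
    have h4 : (∑ _t ∈ T, g) = (T.card : ℝ) * g := by
      rw [Finset.sum_const, nsmul_eq_mul]
    have h5 : (T.card : ℝ) * g ≤ (k:ℝ) * g := by
      apply mul_le_mul_of_nonneg_right _ hgain0
      exact_mod_cast hT
    have h6 : f T - f (S i) ≤ (k:ℝ) * g := by
      calc f T - f (S i) ≤ f (S i ∪ T) - f (S i) := by linarith
        _ ≤ ∑ t ∈ T, (f (insert t (S i)) - f (S i)) := h2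
        _ ≤ (T.card : ℝ) * g := by rw [← h4]; exact h3
        _ ≤ (k:ℝ) * g := h5
    have hdiv : (f T - f (S i)) / (k:ℝ) ≤ g := by
      rw [div_le_iff₀ hkpos, mul_comm]; exact h6
    have hexp : (1 - 1/(k:ℝ)) * (f T - f (S i))
        = (f T - f (S i)) - (f T - f (S i)) / (k:ℝ) := by ring
    have : f T - f (S (i+1)) = (f T - f (S i)) - g := by rw [hg]; ring
    linarith
  have hiter : ∀ i, i ≤ k → f T - f (S i) ≤ (1 - 1/(k:ℝ))^i * f T := by
    intro i
    induction i with
    | zero => intro _; rw [hS0, hempty]; simp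
    | succ n ihn =>
      intro hn
      have hnk : n < k := hn
      have h1 := hstep n hnk
      have h2 := ihn (le_of_lt hnk)
      have h3 : (1 - 1/(k:ℝ)) * (f T - f (S n)) ≤ (1 - 1/(k:ℝ)) * ((1 - 1/(k:ℝ))^n * f T) :=
        mul_le_mul_of_nonneg_left h2 hq
      have h4 : (1 - 1/(k:ℝ)) * ((1 - 1/(k:ℝ))^n * f T) = (1 - 1/(k:ℝ))^(n+1) * f T := by
        ring
      linarith
  have hfinal := hiter k le_rfl
  have hfirst : (1 - (1 - 1/(k:ℝ))^k) * f T ≤ f (S k) := by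
    have : (1 - (1 - 1/(k:ℝ))^k) * f T = f T - (1 - 1/(k:ℝ))^k * f T := by ring
    linarith
  refine ⟨hfirst, ?_⟩
  have hq_le : (1 - 1/(k:ℝ))^k ≤ 1 / Real.exp 1 := by
    have h1 : 1 - 1/(k:ℝ) ≤ Real.exp (-(1/(k:ℝ))) := by
      linarith [Real.add_one_le_exp (-(1/(k:ℝ)))]
    have h2 : (1 - 1/(k:ℝ))^k ≤ Real.exp (-(1/(k:ℝ))) ^ k := pow_le_pow_left₀ hq h1 k
    have h3 : Real.exp (-(1/(k:ℝ))) ^ k = Real.exp (-1) := by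
      rw [← Real.exp_nat_mul]
      congr 1
      field_simp
    rw [h3, Real.exp_neg, ← one_div] at h2
    exact h2
  have : (1 - 1 / Real.exp 1) * f T ≤ (1 - (1 - 1/(k:ℝ))^k) * f T :=
    mul_le_mul_of_nonneg_right (by linarith) hTnn
  linarith
end
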